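/- The M₄(A)-module M_p⁴, viewed over the subalgebra generated by the matrices x₀ ↦ diag(x₀,x₀,x₀,x₀), x₁ ↦ diag(x₁,-x₁,-x₁,x₁), x₂ ↦ the antidiagonal matrix with all antidiagonal entries x₂, and x₃ ↦ the antidiagonal matrix with entries (x₃,-x₃,-x₃,x₃) from top-right to bottom-left, decomposes as a direct sum of four cyclic graded submodules generated by (m₀,0,0,m₀), (m₀,0,0,-m₀), (0,m₀,m₀,0), (0,m₀,-m₀,0), which are isomorphic to the point modules M_p, M_{p^{g₁}}, M_{p^{g₂}}, M_{p^{g₁g₂}} respectively. -/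

import Mathlib

/-- The underlying graded vector space of `M_p⁴`: in each degree a copy of `k⁴`. -/
abbrev Fat4V (k : Type*) [Field k] := ℕ →₀ (Fin 4 → k)

/-- The underlying graded vector space of a point module: in each degree a copy of `k`. -/
abbrev PtV (k : Type*) [Field k] := ℕ →₀ k

/-- The degree-`j` matrix of the right action of the generator `xᵢ` (embedded in `M₄(A)` via
`x₀ ↦ diag(x₀,x₀,x₀,x₀)`, `x₁ ↦ diag(x₁,-x₁,-x₁,x₁)`, `x₂ ↦` the antidiagonal matrix with
all antidiagonal entries `x₂`, `x₃ ↦` the antidiagonal matrix with entries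
`(x₃,-x₃,-x₃,x₃)` from top-right to bottom-left) on `M_p⁴`, via the structure constants
`m_j · xᵢ = α j i • m_{j+1}`. -/
def fat4Mat (k : Type*) [Field k] (α : ℕ → Fin 4 → k) (i : Fin 4) (j : ℕ) :
    Matrix (Fin 4) (Fin 4) k :=
  if i = 0 then α j 0 • (1 : Matrix (Fin 4) (Fin 4) k)
  else if i = 1 then α j 1 • Matrix.diagonal ![1, -1, -1, 1]
  else if i = 2 then α j 2 • !![0, 0, 0, 1; 0, 0, 1, 0; 0, 1, 0, 0; 1, 0, 0, 0]
  else α j 3 • !![0, 0, 0, 1; 0, 0, -1, 0; 0, -1, 0, 0; 1, 0, 0, 0]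

/-- The action of the generator `xᵢ` on `M_p⁴` as a `k`-linear endomorphism. -/
noncomputable def fat4Act (k : Type*) [Field k] (α : ℕ → Fin 4 → k) (i : Fin 4) :
    Fat4V k →ₗ[k] Fat4V k :=
  Finsupp.lsum k fun j => (Finsupp.lsingle (j + 1)).comp (Matrix.toLin' (fat4Mat k α i j))

/-- Sign pattern of the Klein four-group action: the point module `M_{p^g}` has structure
constants `klSgn g i * α j i`. -/
def klSgn (k : Type*) [Field k] (g : ZMod 2 × ZMod 2) : Fin 4 → k :=
  ![1, (-1) ^ g.2.val, (-1) ^ g.1.val, (-1) ^ (g.1.val + g.2.val)]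

/-- The action of `xᵢ` on the point module `M_{p^g}` (modelled on `ℕ →₀ k`). -/
noncomputable def ptAct (k : Type*) [Field k] (α : ℕ → Fin 4 → k) (g : ZMod 2 × ZMod 2)
    (i : Fin 4) : PtV k →ₗ[k] PtV k :=
  Finsupp.lsum k fun j =>
    (Finsupp.lsingle (j + 1)).comp ((klSgn k g i * α j i) • (LinearMap.id : k →ₗ[k] k))

/-- The degree-0 generators `(m₀,0,0,m₀)`, `(m₀,0,0,-m₀)`, `(0,m₀,m₀,0)`, `(0,m₀,-m₀,0)`
of the four cyclic submodules, indexed by `e, g₁, g₂, g₁g₂`. -/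
noncomputable def fat4Gen (k : Type*) [Field k] (g : ZMod 2 × ZMod 2) : Fat4V k :=
  Finsupp.single 0 <|
    if g = ((0 : ZMod 2), (0 : ZMod 2)) then ![1, 0, 0, 1]
    else if g = (1, 0) then ![1, 0, 0, -1]
    else if g = (0, 1) then ![0, 1, 1, 0]
    else ![0, 1, -1, 0]



def kvec (k : Type*) [Field k] (g : ZMod 2 × ZMod 2) : Fin 4 → k :=
  if g = ((0 : ZMod 2), (0 : ZMod 2)) then ![1, 0, 0, 1]
  else if g = (1, 0) then ![1, 0, 0, -1]
  else if g = (0, 1) then ![0, 1, 1, 0]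
  else ![0, 1, -1, 0]

noncomputable def phiG (k : Type*) [Field k] (g : ZMod 2 × ZMod 2) : PtV k →ₗ[k] Fat4V k :=
  Finsupp.mapRange.linearMap (LinearMap.toSpanSingleton k (Fin 4 → k) (kvec k g))

lemma phiG_apply (k : Type*) [Field k] (g) (u : PtV k) (n : ℕ) :
    phiG k g u n = u n • kvec k g := by
  simp [phiG, LinearMap.toSpanSingleton]

lemma phiG_single (k : Type*) [Field k] (g) (j : ℕ) (c : k) :
    phiG k g (Finsupp.single j c) = Finsupp.single j (c • kvec k g) := by
  simp [phiG]

lemma kvec_ne_zero (k : Type*) [Field k] (g : ZMod 2 × ZMod 2) : kvec k g ≠ 0 := by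
  rcases g with ⟨a, b⟩
  fin_cases a <;> fin_cases b <;> simp [kvec] <;> intro h <;>
    first
    | exact one_ne_zero (congrFun h 0)
    | exact one_ne_zero (congrFun h 1)

lemma klSgn_ne_zero (k : Type*) [Field k] (g) (i : Fin 4) : klSgn k g i ≠ 0 := by
  fin_cases i <;> simp [klSgn] <;>
    exact pow_ne_zero _ (neg_ne_zero.mpr one_ne_zero)

lemma fat4Act_single (k : Type*) [Field k] (α : ℕ → Fin 4 → k) (i : Fin 4) (j : ℕ)
    (v : Fin 4 → k) :
    fat4Act k α i (Finsupp.single j v) =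
      Finsupp.single (j + 1) ((fat4Mat k α i j).mulVec v) := by
  simp [fat4Act, Matrix.toLin'_apply]

lemma ptAct_single (k : Type*) [Field k] (α : ℕ → Fin 4 → k) (g) (i : Fin 4) (j : ℕ) (c : k) :
    ptAct k α g i (Finsupp.single j c) =
      Finsupp.single (j + 1) ((klSgn k g i * α j i) * c) := by
  simp [ptAct, mul_comm]

lemma mulVec_kvec (k : Type*) [Field k] (α : ℕ → Fin 4 → k) (i : Fin 4) (j : ℕ)
    (g : ZMod 2 × ZMod 2) :
    (fat4Mat k α i j).mulVec (kvec k g) = (klSgn k g i * α j i) • kvec k g := by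
  rcases g with ⟨a, b⟩
  funext x
  fin_cases a <;> fin_cases b <;> fin_cases i <;> fin_cases x <;>
    simp (config := {decide := true}) [fat4Mat, kvec, klSgn, Matrix.mulVec, dotProduct, Fin.sum_univ_four,
      Prod.ext_iff, ZMod.val] <;> ring

def coefG (k : Type*) [Field k] (g : ZMod 2 × ZMod 2) (u : Fin 4 → k) : k :=
  if g = ((0 : ZMod 2), (0 : ZMod 2)) then (u 0 + u 3) / 2
  else if g = (1, 0) then (u 0 - u 3) / 2
  else if g = (0, 1) then (u 1 + u 2) / 2
  else (u 1 - u 2) / 2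

lemma coefG_zero (k : Type*) [Field k] (g) : coefG k g (0 : Fin 4 → k) = 0 := by
  unfold coefG; split_ifs <;> simp

lemma sum_zmod2 {M : Type*} [AddCommMonoid M] (f : ZMod 2 → M) :
    ∑ a, f a = f 0 + f 1 := by
  have h : (Finset.univ : Finset (ZMod 2)) = {0, 1} := by decide
  rw [h, Finset.sum_insert (by decide), Finset.sum_singleton]

lemma sum_klein {M : Type*} [AddCommMonoid M] (f : ZMod 2 × ZMod 2 → M) :
    ∑ g, f g = f (0, 0) + f (0, 1) + f (1, 0) + f (1, 1) := by
  rw [Fintype.sum_prod_type, sum_zmod2 (fun a => ∑ b, f (a, b)), sum_zmod2, sum_zmod2]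
  abel

lemma sum_phi_apply (k : Type*) [Field k] (w : (ZMod 2 × ZMod 2) → PtV k) (n : ℕ) :
    (∑ g, phiG k g (w g)) n = ∑ g, (w g n) • kvec k g := by
  rw [Finsupp.finset_sum_apply]
  exact Finset.sum_congr rfl fun g _ => phiG_apply k g (w g) n


/-- `M_p⁴`, viewed over the subalgebra of `M₄(A)` generated by the four stated
matrices, decomposes as an internal direct sum of four graded submodules, cyclic on the
degree-0 generators `(m₀,0,0,m₀)`, `(m₀,0,0,-m₀)`, `(0,m₀,m₀,0)`, `(0,m₀,-m₀,0)`, which are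
isomorphic to the point modules `M_p`, `M_{p^{g₁}}`, `M_{p^{g₂}}`, `M_{p^{g₁g₂}}`
respectively.  Formally: there are injective intertwining maps `φ g` from the model of
`M_{p^g}` into `M_p⁴` sending `m₀` to the stated generator, whose combined map is a linear
bijection (internal direct sum), and whose images are exactly the stable submodules
generated by the four generators (cyclicity). -/
theorem stmt18 {k : Type*} [Field k] (h2 : (2 : k) ≠ 0) (α : ℕ → Fin 4 → k)
    (hα : ∀ j : ℕ, ∃ i : Fin 4, α j i ≠ 0) :
    ∃ φ : (ZMod 2 × ZMod 2) → (PtV k →ₗ[k] Fat4V k),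
      (∀ g, Function.Injective (φ g)) ∧
      (∀ g i w, φ g (ptAct k α g i w) = fat4Act k α i (φ g w)) ∧
      (∀ g, φ g (Finsupp.single 0 1) = fat4Gen k g) ∧
      Function.Bijective (fun w : (ZMod 2 × ZMod 2) → PtV k => ∑ g, φ g (w g)) ∧
      (∀ g, ∀ N : Submodule k (Fat4V k),
        (∀ (i : Fin 4), ∀ v ∈ N, fat4Act k α i v ∈ N) →
        fat4Gen k g ∈ N → LinearMap.range (φ g) ≤ N) := by
  refine ⟨fun g => phiG k g, ?_, ?_, ?_, ?_, ?_⟩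
  · -- injectivity
    intro g
    rw [injective_iff_map_eq_zero]
    intro u hu
    ext n
    have h := DFunLike.congr_fun hu n
    rw [phiG_apply] at h
    simp only [Finsupp.coe_zero, Pi.zero_apply] at h
    rcases smul_eq_zero.mp h with h | h
    · simpa using h
    · exact absurd h (kvec_ne_zero k g)
  · -- intertwining
    intro g i w
    induction w using Finsupp.induction_linear with
    | zero => simp
    | add f h hf hh => simp [map_add, hf, hh]
    | single j c =>
      rw [ptAct_single, phiG_single, phiG_single, fat4Act_single, Matrix.mulVec_smul,
        mulVec_kvec]
      congr 1
      rw [smul_smul]; ring_nf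
  · -- generators
    intro g
    rw [phiG_single, one_smul]
    rfl
  · -- bijectivity
    rw [Function.bijective_iff_has_inverse]
    refine ⟨fun v g => Finsupp.mapRange (coefG k g) (coefG_zero k g) v, ?_, ?_⟩
    · intro w
      funext g
      ext n
      rw [Finsupp.mapRange_apply, sum_phi_apply, sum_klein]
      rcases g with ⟨a, b⟩
      fin_cases a <;> fin_cases b <;>
        simp (config := {decide := true}) [coefG, kvec, Prod.ext_iff] <;> field_simp <;> ring_nf <;> rfl
    · intro v
      ext n x
      rw [sum_phi_apply, sum_klein]
      simp only [Finsupp.mapRange_apply]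
      fin_cases x <;>
        simp (config := {decide := true}) [coefG, kvec, Prod.ext_iff] <;> field_simp <;> ring
  · -- cyclicity
    intro g N hN hgen
    have key : ∀ n : ℕ, Finsupp.single n (kvec k g) ∈ N := by
      intro n
      induction n with
      | zero => exact hgen
      | succ n ih =>
        obtain ⟨i, hi⟩ := hα n
        have h1 := hN i _ ih
        rw [fat4Act_single, mulVec_kvec, ← Finsupp.smul_single] at h1
        have hc : klSgn k g i * α n i ≠ 0 := mul_ne_zero (klSgn_ne_zero k g i) hi
        have h2' := N.smul_mem (klSgn k g i * α n i)⁻¹ h1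
        rwa [smul_smul, inv_mul_cancel₀ hc, one_smul] at h2'
    rintro x ⟨w, rfl⟩
    induction w using Finsupp.induction_linear with
    | zero => simp only [map_zero]; exact N.zero_mem
    | add f h hf hh => rw [map_add]; exact N.add_mem hf hh
    | single j c =>
      rw [phiG_single, ← Finsupp.smul_single]
      exact N.smul_mem _ (key j)
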